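/- arXiv:2004.11955 — 4 statements merged into one kernel-verified Lean document; each statement's English description precedes it below -/
import Mathlib

section
/- Let C = [-1,1] × {0} ⊆ ℝ². Let Ω ⊆ ℝ² be a bounded open set with C ⊆ Ω which satisfies the C-SP property: for every x ∈ (frontier Ω) \ C, the cone K_x = {y ∈ ℝ² : ∀ c ∈ C, ⟨y - x, c - x⟩ ≤ 0} satisfies K_x ∩ Ω = ∅. Then Ω is convex in the direction Oy: for every α ∈ ℝ, the vertical section {t ∈ ℝ : (α, t) ∈ Ω} is order-connected (i.e., whenever t₁ < t < t₂ and (α, t₁) ∈ Ω and (α, t₂) ∈ Ω, then (α, t) ∈ Ω). -/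
open Set
open scoped RealInnerProductSpace

/-- The point `(a, b)` of the Euclidean plane. -/
noncomputable def pt (a b : ℝ) : EuclideanSpace ℝ (Fin 2) := WithLp.toLp 2 ![a, b]

/-- The segment `C = [-1,1] × {0}` in the Euclidean plane. -/
def segC : Set (EuclideanSpace ℝ (Fin 2)) :=
  {p | p 0 ∈ Set.Icc (-1 : ℝ) 1 ∧ p 1 = 0}

/-- The cone `K_x = {y : ∀ c ∈ C, ⟨y - x, c - x⟩ ≤ 0}`. -/
noncomputable def coneK (x : EuclideanSpace ℝ (Fin 2)) : Set (EuclideanSpace ℝ (Fin 2)) :=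
  {y | ∀ c ∈ segC, ⟪y - x, c - x⟫ ≤ 0}

lemma aux_inner_vert (α s u : ℝ) (c : EuclideanSpace ℝ (Fin 2)) (hc : c ∈ segC) :
    ⟪pt α u - pt α s, c - pt α s⟫ = (u - s) * (0 - s) := by
  have h1 : c 1 = 0 := hc.2
  simp [pt, PiLp.inner_apply, Fin.sum_univ_two, h1]
  ring

lemma aux_cont_pt (α : ℝ) : Continuous fun u : ℝ => pt α u := by
  unfold pt
  exact (PiLp.continuous_toLp 2 _).comp (continuous_pi fun i => by fin_cases i <;> simp <;> continuity)

lemma aux_up (Ω : Set (EuclideanSpace ℝ (Fin 2)))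
    (hΩo : IsOpen Ω) (hCΩ : segC ⊆ Ω)
    (hSP : ∀ x ∈ frontier Ω \ segC, coneK x ∩ Ω = ∅)
    (α t t₂ : ℝ) (ht : 0 ≤ t) (htb : t < t₂) (h₂ : pt α t₂ ∈ Ω) :
    pt α t ∈ Ω := by
  by_contra h
  set A : Set ℝ := {u | u ∈ Icc t t₂ ∧ ∀ v ∈ Icc u t₂, pt α v ∈ Ω} with hA
  have hne : t₂ ∈ A := by
    refine ⟨⟨le_of_lt htb, le_refl _⟩, fun v hv => ?_⟩
    have : v = t₂ := le_antisymm hv.2 hv.1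
    rwa [this]
  have hbdd : BddBelow A := ⟨t, fun u hu => hu.1.1⟩
  set s := sInf A with hs
  have hst : t ≤ s := le_csInf ⟨t₂, hne⟩ (fun u hu => hu.1.1)
  have hs2 : s ≤ t₂ := csInf_le hbdd hne
  have key : ∀ u, s < u → u ≤ t₂ → pt α u ∈ Ω := by
    intro u hu hu2
    obtain ⟨a, haA, hau⟩ := exists_lt_of_csInf_lt ⟨t₂, hne⟩ hu
    exact haA.2 u ⟨le_of_lt hau, hu2⟩
  have hsΩ : pt α s ∉ Ω := by
    intro hsΩ
    have hst' : t < s := lt_of_le_of_ne hst (fun e => h (e ▸ hsΩ))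
    have hnb : (fun u : ℝ => pt α u) ⁻¹' Ω ∈ nhds s :=
      ((hΩo.preimage (aux_cont_pt α)).mem_nhds hsΩ)
    rw [Metric.mem_nhds_iff] at hnb
    obtain ⟨ε, hε, hball⟩ := hnb
    set u := max t (max (s - ε/2) (s - (s - t)/2)) with hu
    have hut : t ≤ u := le_max_left _ _
    have hus : u < s := by
      apply max_lt hst'
      apply max_lt <;> linarith
    have huA : u ∈ A := by
      refine ⟨⟨hut, le_trans (le_of_lt hus) hs2⟩, fun v hv => ?_⟩
      rcases lt_or_ge v s with hvs | hvs
      · apply hball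
        rw [Metric.mem_ball, Real.dist_eq, abs_lt]
        have : s - ε/2 ≤ u := le_trans (le_max_left _ _) (le_max_right _ _)
        constructor <;> [linarith [hv.1]; linarith]
      · rcases eq_or_lt_of_le hvs with hvs' | hvs'
        · rw [← hvs']; exact hsΩ
        · exact key v hvs' hv.2
    have := csInf_le hbdd huA
    rw [← hs] at this
    linarith
  have hs2' : s < t₂ := lt_of_le_of_ne hs2 (fun e => hsΩ (e ▸ h₂))
  have hsc : pt α s ∈ closure Ω := by
    have h1 : s ∈ closure (Ioc s t₂) := by
      rw [closure_Ioc (ne_of_lt hs2')]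
      exact ⟨le_refl _, le_of_lt hs2'⟩
    exact map_mem_closure (aux_cont_pt α) h1 (fun u hu => key u hu.1 hu.2)
  have hfr : pt α s ∈ frontier Ω := by
    rw [hΩo.frontier_eq]; exact ⟨hsc, hsΩ⟩
  have hnc : pt α s ∉ segC := fun hc => hsΩ (hCΩ hc)
  have hSP' := hSP _ ⟨hfr, hnc⟩
  have hmem : pt α t₂ ∈ coneK (pt α s) := by
    intro c hc
    rw [aux_inner_vert _ _ _ _ hc]
    have h0s : 0 ≤ s := le_trans ht hst
    nlinarith
  have : pt α t₂ ∈ coneK (pt α s) ∩ Ω := ⟨hmem, h₂⟩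
  rw [hSP'] at this
  exact this

lemma aux_down (Ω : Set (EuclideanSpace ℝ (Fin 2)))
    (hΩo : IsOpen Ω) (hCΩ : segC ⊆ Ω)
    (hSP : ∀ x ∈ frontier Ω \ segC, coneK x ∩ Ω = ∅)
    (α t t₁ : ℝ) (ht : t ≤ 0) (htb : t₁ < t) (h₁ : pt α t₁ ∈ Ω) :
    pt α t ∈ Ω := by
  by_contra h
  set A : Set ℝ := {u | u ∈ Icc t₁ t ∧ ∀ v ∈ Icc t₁ u, pt α v ∈ Ω} with hA
  have hne : t₁ ∈ A := by
    refine ⟨⟨le_refl _, le_of_lt htb⟩, fun v hv => ?_⟩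
    have : v = t₁ := le_antisymm hv.2 hv.1
    rwa [this]
  have hbdd : BddAbove A := ⟨t, fun u hu => hu.1.2⟩
  set s := sSup A with hs
  have hst : s ≤ t := csSup_le ⟨t₁, hne⟩ (fun u hu => hu.1.2)
  have hs2 : t₁ ≤ s := le_csSup hbdd hne
  have key : ∀ u, u < s → t₁ ≤ u → pt α u ∈ Ω := by
    intro u hu hu2
    obtain ⟨a, haA, hau⟩ := exists_lt_of_lt_csSup ⟨t₁, hne⟩ hu
    exact haA.2 u ⟨hu2, le_of_lt hau⟩
  have hsΩ : pt α s ∉ Ω := by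
    intro hsΩ
    have hst' : s < t := lt_of_le_of_ne hst (fun e => h (e ▸ hsΩ))
    have hnb : (fun u : ℝ => pt α u) ⁻¹' Ω ∈ nhds s :=
      ((hΩo.preimage (aux_cont_pt α)).mem_nhds hsΩ)
    rw [Metric.mem_nhds_iff] at hnb
    obtain ⟨ε, hε, hball⟩ := hnb
    set u := min t (min (s + ε/2) (s + (t - s)/2)) with hu
    have hut : u ≤ t := min_le_left _ _
    have hus : s < u := by
      apply lt_min hst'
      apply lt_min <;> linarith
    have huA : u ∈ A := by
      refine ⟨⟨le_trans hs2 (le_of_lt hus), hut⟩, fun v hv => ?_⟩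
      rcases lt_or_ge s v with hvs | hvs
      · apply hball
        rw [Metric.mem_ball, Real.dist_eq, abs_lt]
        have : u ≤ s + ε/2 := le_trans (min_le_right _ _) (min_le_left _ _)
        constructor <;> [linarith; linarith [hv.2]]
      · rcases eq_or_lt_of_le hvs with hvs' | hvs'
        · rw [hvs']; exact hsΩ
        · exact key v hvs' hv.1
    have := le_csSup hbdd huA
    rw [← hs] at this
    linarith
  have hs2' : t₁ < s := lt_of_le_of_ne hs2 (fun e => hsΩ (e ▸ h₁))
  have hsc : pt α s ∈ closure Ω := by
    have h1 : s ∈ closure (Ico t₁ s) := by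
      rw [closure_Ico (ne_of_lt hs2')]
      exact ⟨le_of_lt hs2', le_refl _⟩
    exact map_mem_closure (aux_cont_pt α) h1 (fun u hu => key u hu.2 hu.1)
  have hfr : pt α s ∈ frontier Ω := by
    rw [hΩo.frontier_eq]; exact ⟨hsc, hsΩ⟩
  have hnc : pt α s ∉ segC := fun hc => hsΩ (hCΩ hc)
  have hSP' := hSP _ ⟨hfr, hnc⟩
  have hmem : pt α t₁ ∈ coneK (pt α s) := by
    intro c hc
    rw [aux_inner_vert _ _ _ _ hc]
    have h0s : s ≤ 0 := le_trans hst ht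
    nlinarith
  have : pt α t₁ ∈ coneK (pt α s) ∩ Ω := ⟨hmem, h₁⟩
  rw [hSP'] at this
  exact this

/-- If a bounded open set `Ω ⊆ ℝ²` contains the segment `C = [-1,1] × {0}` and satisfies the
`C`-SP property (for every `x ∈ ∂Ω \ C`, the cone `K_x` misses `Ω`), then `Ω` is convex in the
`Oy` direction: every vertical section of `Ω` is order-connected. -/
theorem stmt0 (Ω : Set (EuclideanSpace ℝ (Fin 2)))
    (hΩo : IsOpen Ω) (hΩb : Bornology.IsBounded Ω) (hCΩ : segC ⊆ Ω)
    (hSP : ∀ x ∈ frontier Ω \ segC, coneK x ∩ Ω = ∅) :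
    ∀ α t₁ t t₂ : ℝ, t₁ < t → t < t₂ → pt α t₁ ∈ Ω → pt α t₂ ∈ Ω → pt α t ∈ Ω := by
  intro α t₁ t t₂ h1 h2 hm1 hm2
  rcases le_or_gt 0 t with ht | ht
  · exact aux_up Ω hΩo hCΩ hSP α t t₂ ht h2 hm2
  · exact aux_down Ω hΩo hCΩ hSP α t t₁ (le_of_lt ht) h1 hm1
end

section
/- Let Ω ⊆ ℝ² be a bounded open set. Then the one-dimensional Hausdorff measure of the part of the frontier of Ω lying in the open upper half-plane is at least the Lebesgue measure of the horizontal section of Ω at height 0: H¹((frontier Ω) ∩ {(x, y) ∈ ℝ² : y > 0}) ≥ Leb¹({x ∈ ℝ : (x, 0) ∈ Ω}). -/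
open Set MeasureTheory

lemma pt_apply0 (a b : ℝ) : pt a b 0 = a := rfl
lemma pt_apply1 (a b : ℝ) : pt a b 1 = b := rfl

lemma dist_pt (x s t : ℝ) : dist (pt x s) (pt x t) = dist s t := by
  rw [EuclideanSpace.dist_eq]
  simp [Fin.sum_univ_two, pt_apply0, pt_apply1, Real.dist_eq, Real.sqrt_sq_eq_abs]

lemma abs_le_norm_pt (x s : ℝ) : |s| ≤ ‖pt x s‖ := by
  rw [EuclideanSpace.norm_eq]
  simp only [Fin.sum_univ_two, pt_apply0, pt_apply1, Real.norm_eq_abs]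
  calc |s| = Real.sqrt (|s| ^ 2) := (Real.sqrt_sq (abs_nonneg s)).symm
    _ ≤ _ := by
        apply Real.sqrt_le_sqrt
        nlinarith [sq_nonneg x, sq_abs x, sq_abs s]

lemma lip_proj : LipschitzWith 1 (fun p : EuclideanSpace ℝ (Fin 2) => p 0) := by
  intro p q
  rw [ENNReal.coe_one, one_mul, edist_dist, edist_dist]
  apply ENNReal.ofReal_le_ofReal
  rw [EuclideanSpace.dist_eq]
  simp only [Fin.sum_univ_two, Real.dist_eq]
  calc |p 0 - q 0| = Real.sqrt (|p 0 - q 0| ^ 2) := (Real.sqrt_sq (abs_nonneg _)).symm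
    _ ≤ _ := by
        apply Real.sqrt_le_sqrt
        have := sq_nonneg (dist (p 1) (q 1))
        rw [Real.dist_eq] at this
        nlinarith [sq_abs (p 0 - q 0)]

/-- For a bounded open set `Ω ⊆ ℝ²`, the one-dimensional Hausdorff measure of the part of
`∂Ω` lying in the open upper half-plane is at least the Lebesgue measure of the horizontal
section `{x : (x,0) ∈ Ω}`. -/
theorem stmt3 (Ω : Set (EuclideanSpace ℝ (Fin 2)))
    (hΩo : IsOpen Ω) (hΩb : Bornology.IsBounded Ω) :
    volume {x : ℝ | pt x 0 ∈ Ω} ≤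
      μH[1] (frontier Ω ∩ {p : EuclideanSpace ℝ (Fin 2) | 0 < p 1}) := by
  set S := frontier Ω ∩ {p : EuclideanSpace ℝ (Fin 2) | 0 < p 1} with hS
  obtain ⟨R, hR⟩ := hΩb.exists_norm_le
  have key : {x : ℝ | pt x 0 ∈ Ω} ⊆ (fun p : EuclideanSpace ℝ (Fin 2) => p 0) '' S := by
    intro x hx
    simp only [mem_setOf_eq] at hx
    set T : Set ℝ := {s : ℝ | 0 ≤ s ∧ pt x s ∉ Ω} with hT
    have hcont : Continuous (fun s : ℝ => pt x s) := by
      apply LipschitzWith.continuous (K := 1)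
      intro s t
      rw [edist_dist, edist_dist, dist_pt]
      simp
    have hTclosed : IsClosed T := by
      have : T = Ici 0 ∩ (fun s : ℝ => pt x s) ⁻¹' Ωᶜ := by
        ext s; simp [hT, mem_preimage]
      rw [this]
      exact isClosed_Ici.inter (hΩo.isClosed_compl.preimage hcont)
    have hTne : T.Nonempty := by
      refine ⟨|R| + 1, by positivity, fun hmem => ?_⟩
      have h1 := hR _ hmem
      have h2 := abs_le_norm_pt x (|R| + 1)
      have : |(|R| + 1)| = |R| + 1 := abs_of_nonneg (by positivity)
      rw [this] at h2
      have : R ≤ |R| := le_abs_self R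
      linarith
    have hTbdd : BddBelow T := ⟨0, fun s hs => hs.1⟩
    set t := sInf T with ht
    have htmem : t ∈ T := hTclosed.csInf_mem hTne hTbdd
    have ht0 : 0 < t := by
      rcases lt_or_eq_of_le htmem.1 with h | h
      · exact h
      · exact absurd hx (h ▸ htmem.2)
    have key2 : ∀ s : ℝ, 0 ≤ s → s < t → pt x s ∈ Ω := by
      intro s hs0 hst
      by_contra hc
      exact absurd (csInf_le hTbdd ⟨hs0, hc⟩) (not_le.mpr hst)
    have hclos : pt x t ∈ closure Ω := by
      rw [Metric.mem_closure_iff]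
      intro ε hε
      refine ⟨pt x (max 0 (t - ε / 2)),
        key2 _ (le_max_left _ _) (max_lt ht0 (by linarith)), ?_⟩
      rw [dist_pt, Real.dist_eq]
      rcases le_total 0 (t - ε / 2) with h | h
      · rw [max_eq_right h, abs_of_nonneg (by linarith)]; linarith
      · rw [max_eq_left h, abs_of_nonneg (by linarith)]; linarith
    refine ⟨pt x t, ⟨?_, ?_⟩, rfl⟩
    · rw [hΩo.frontier_eq]
      exact ⟨hclos, htmem.2⟩
    · simpa [pt_apply1] using ht0
  calc volume {x : ℝ | pt x 0 ∈ Ω}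
      = μH[1] {x : ℝ | pt x 0 ∈ Ω} := by rw [MeasureTheory.hausdorffMeasure_real]
    _ ≤ μH[1] ((fun p : EuclideanSpace ℝ (Fin 2) => p 0) '' S) := measure_mono key
    _ ≤ μH[1] S := by
        simpa using lip_proj.hausdorffMeasure_image_le zero_le_one S
end

section
/- Let Ω ⊆ ℝ² be a bounded open set containing the segment C = [-1,1] × {0} (so C ⊆ Ω, hence C is contained in the interior of Ω since Ω is open). Then the one-dimensional Hausdorff measure of the frontier of Ω is strictly greater than 4: H¹(frontier Ω) > 4. -/
open Set MeasureTheory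
open scoped NNReal ENNReal

/-- The point `(x, y)` of the Euclidean plane. -/
noncomputable def vpt (x y : ℝ) : EuclideanSpace ℝ (Fin 2) :=
  (WithLp.equiv 2 (Fin 2 → ℝ)).symm ![x, y]

@[simp] lemma vpt_zero (x y : ℝ) : vpt x y 0 = x := by
  simp [vpt]

@[simp] lemma vpt_one (x y : ℝ) : vpt x y 1 = y := by
  simp [vpt]

lemma lipProj (i : Fin 2) :
    LipschitzWith 1 (fun p : EuclideanSpace ℝ (Fin 2) => p i) := by
  have h := (LipschitzWith.eval i).comp (PiLp.lipschitzWith_ofLp 2 (fun _ : Fin 2 => ℝ))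
  rw [mul_one] at h
  exact h

lemma continuous_vpt (x : ℝ) : Continuous fun t => vpt x t := by
  apply (PiLp.continuous_toLp 2 (fun _ : Fin 2 => ℝ)).comp
  refine continuous_pi fun i => ?_
  fin_cases i <;> simp <;> fun_prop

lemma continuous_vpt0 : Continuous fun x : ℝ => vpt x 0 := by
  apply (PiLp.continuous_toLp 2 (fun _ : Fin 2 => ℝ)).comp
  refine continuous_pi fun i => ?_
  fin_cases i <;> simp <;> fun_prop

/-- If a continuous path starts inside an open set and ends outside, it meets the frontier
at some positive time. -/
lemma exit_frontier {Ω : Set (EuclideanSpace ℝ (Fin 2))} (hΩo : IsOpen Ω)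
    (g : ℝ → EuclideanSpace ℝ (Fin 2)) (hg : Continuous g) (h0 : g 0 ∈ Ω)
    {T : ℝ} (hT0 : 0 < T) (hTn : g T ∉ Ω) :
    ∃ y, 0 < y ∧ g y ∈ frontier Ω := by
  set A := {t : ℝ | 0 ≤ t ∧ g t ∉ Ω} with hA
  have hTA : T ∈ A := ⟨hT0.le, hTn⟩
  have hAne : A.Nonempty := ⟨T, hTA⟩
  have hbdd : BddBelow A := ⟨0, fun t ht => ht.1⟩
  set y := sInf A with hy
  have hy0 : 0 ≤ y := le_csInf hAne fun t ht => ht.1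
  have hopen : IsOpen (g ⁻¹' Ω) := hΩo.preimage hg
  obtain ⟨δ, hδ, hball⟩ := Metric.isOpen_iff.1 hopen 0 h0
  have hyδ : δ ≤ y := by
    refine le_csInf hAne fun t ht => ?_
    by_contra h
    push_neg at h
    exact ht.2 (hball (by simpa [Real.dist_eq, abs_of_nonneg ht.1] using h))
  have hypos : 0 < y := lt_of_lt_of_le hδ hyδ
  have hnot : g y ∉ Ω := by
    intro hmem
    obtain ⟨ρ, hρ, hball2⟩ := Metric.isOpen_iff.1 hopen y hmem
    obtain ⟨t, htA, htlt⟩ := (csInf_lt_iff hbdd hAne).1 (by linarith : sInf A < y + ρ)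
    have hty : y ≤ t := csInf_le hbdd htA
    refine htA.2 (hball2 ?_)
    rw [Metric.mem_ball, Real.dist_eq, abs_of_nonneg (by linarith)]
    linarith
  have hsub : Ico 0 y ⊆ g ⁻¹' Ω := by
    intro t ht
    by_contra h
    exact absurd (csInf_le hbdd ⟨ht.1, h⟩) (not_le.2 ht.2)
  have hc : y ∈ closure (g ⁻¹' Ω) := by
    have : y ∈ closure (Ico 0 y) := by
      rw [closure_Ico hypos.ne]
      exact ⟨hy0, le_rfl⟩
    exact closure_mono hsub this
  have hcl : g y ∈ closure Ω := (hg.closure_preimage_subset Ω) hc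
  exact ⟨y, hypos, by rw [hΩo.frontier_eq]; exact ⟨hcl, hnot⟩⟩

/-- Any bounded open set `Ω ⊆ ℝ²` containing the segment `C = [-1,1] × {0}` has frontier of
one-dimensional Hausdorff measure strictly greater than `4`. -/
theorem stmt4 (Ω : Set (EuclideanSpace ℝ (Fin 2)))
    (hΩo : IsOpen Ω) (hΩb : Bornology.IsBounded Ω) (hCΩ : segC ⊆ Ω) :
    4 < μH[1] (frontier Ω) := by
  classical
  -- enlarge the segment slightly
  have hIccsub : Icc (-1 : ℝ) 1 ⊆ (fun x => vpt x 0) ⁻¹' Ω := by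
    intro x hx
    exact hCΩ ⟨by simpa using hx, by simp⟩
  obtain ⟨δ, hδpos, hδsub⟩ :=
    (isCompact_Icc : IsCompact (Icc (-1 : ℝ) 1)).exists_cthickening_subset_open
      (hΩo.preimage continuous_vpt0) hIccsub
  set a : ℝ := 1 + δ / 2 with ha
  have ha1 : (1 : ℝ) < a := by simp [ha]; linarith
  have ha0 : (0 : ℝ) < a := by linarith
  -- every horizontal point (x, 0) with |x| ≤ a lies in Ω
  have hmemΩ : ∀ x ∈ Icc (-a) a, vpt x 0 ∈ Ω := by
    intro x hx
    refine hδsub ?_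
    set c : ℝ := max (-1) (min 1 x) with hc
    have hcI : c ∈ Icc (-1 : ℝ) 1 := by
      constructor
      · exact le_max_left _ _
      · refine max_le (by linarith) (min_le_left _ _)
    have hdist : dist x c ≤ δ / 2 := by
      rw [Real.dist_eq, abs_le]
      rcases le_total x (-1) with h1 | h1
      · have : c = -1 := by
          rw [hc, min_eq_right (by linarith), max_eq_left (by linarith)]
        rw [this]
        constructor <;> [skip; linarith]
        have := hx.1
        simp only [ha] at this ⊢
        linarith
      rcases le_total 1 x with h2 | h2
      · have : c = 1 := by
          rw [hc, min_eq_left h2, max_eq_right (by linarith)]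
        rw [this]
        have := hx.2
        simp only [ha] at this ⊢
        constructor <;> linarith [hδpos.le]
      · have : c = x := by
          rw [hc, min_eq_right h2, max_eq_right h1]
        rw [this]
        constructor <;> simp <;> linarith [hδpos.le]
    exact Metric.mem_cthickening_of_dist_le _ _ _ _ (hcI : c ∈ Icc (-1:ℝ) 1) (by linarith)
  -- bound on Ω
  obtain ⟨R, hR⟩ := hΩb.subset_closedBall (0 : EuclideanSpace ℝ (Fin 2))
  have houtside : ∀ x t : ℝ, |t| = R + 1 → vpt x t ∉ Ω := by
    intro x t ht hmem
    have h1 : dist (vpt x t) 0 ≤ R := Metric.mem_closedBall.1 (hR hmem)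
    have h2 : dist ((vpt x t) 1) ((0 : EuclideanSpace ℝ (Fin 2)) 1) ≤ dist (vpt x t) 0 := by
      simpa using (lipProj 1).dist_le_mul (vpt x t) 0
    have h3 : ((0 : EuclideanSpace ℝ (Fin 2)) 1) = 0 := rfl
    rw [h3, vpt_one, Real.dist_eq, sub_zero, ht] at h2
    have hR0 : 0 ≤ R := (dist_nonneg).trans h1
    linarith
  have hT0 : (0 : ℝ) < R + 1 := by
    have hR0 : 0 ≤ R := le_trans dist_nonneg
      (Metric.mem_closedBall.1 (hR (hmemΩ 0 ⟨by linarith, by linarith⟩)))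
    linarith
  -- frontier points above and below
  have hup : ∀ x ∈ Icc (-a) a, ∃ y, 0 < y ∧ vpt x y ∈ frontier Ω := by
    intro x hx
    have := exit_frontier hΩo (fun t => vpt x t) (continuous_vpt x) (hmemΩ x hx) hT0
      (houtside x (R + 1) (abs_of_pos hT0))
    exact this
  have hdown : ∀ x ∈ Icc (-a) a, ∃ y, y < 0 ∧ vpt x y ∈ frontier Ω := by
    intro x hx
    obtain ⟨y, hy0, hyF⟩ := exit_frontier hΩo (fun t => vpt x (-t))
      ((continuous_vpt x).comp continuous_neg) (by simpa using hmemΩ x hx) hT0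
      (houtside x (-(R + 1)) (by rw [abs_neg, abs_of_pos hT0]))
    exact ⟨-y, by linarith, hyF⟩
  -- project the two frontier pieces
  set F := frontier Ω with hF
  set U : Set (EuclideanSpace ℝ (Fin 2)) := {p | 0 < p 1} with hU
  set D : Set (EuclideanSpace ℝ (Fin 2)) := {p | p 1 < 0} with hD
  have hUo : IsOpen U := isOpen_lt continuous_const ((lipProj 1).continuous)
  have hDo : IsOpen D := isOpen_lt ((lipProj 1).continuous) continuous_const
  have hprojU : Icc (-a) a ⊆ (fun p : EuclideanSpace ℝ (Fin 2) => p 0) '' (F ∩ U) := by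
    intro x hx
    obtain ⟨y, hy0, hyF⟩ := hup x hx
    exact ⟨vpt x y, ⟨hyF, by simpa [hU] using hy0⟩, by simp⟩
  have hprojD : Icc (-a) a ⊆ (fun p : EuclideanSpace ℝ (Fin 2) => p 0) '' (F ∩ D) := by
    intro x hx
    obtain ⟨y, hy0, hyF⟩ := hdown x hx
    exact ⟨vpt x y, ⟨hyF, by simpa [hD] using hy0⟩, by simp⟩
  -- measure bounds
  have hIccval : (μH[1] (Icc (-a) a : Set ℝ)) = ENNReal.ofReal (2 * a) := by
    rw [MeasureTheory.hausdorffMeasure_real, Real.volume_Icc]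
    ring_nf
  have hbound : ∀ S : Set (EuclideanSpace ℝ (Fin 2)),
      Icc (-a) a ⊆ (fun p : EuclideanSpace ℝ (Fin 2) => p 0) '' S →
      ENNReal.ofReal (2 * a) ≤ μH[1] S := by
    intro S hS
    calc ENNReal.ofReal (2 * a) = μH[1] (Icc (-a) a : Set ℝ) := hIccval.symm
      _ ≤ μH[1] ((fun p : EuclideanSpace ℝ (Fin 2) => p 0) '' S) := measure_mono hS
      _ ≤ (1 : ℝ≥0) ^ (1 : ℝ) * μH[1] S :=
          (lipProj 0).hausdorffMeasure_image_le zero_le_one S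
      _ = μH[1] S := by simp
  have hUb := hbound _ hprojU
  have hDb := hbound _ hprojD
  -- combine
  have hsplit : μH[1] (F ∩ U) + μH[1] (F \ U) = μH[1] F :=
    measure_inter_add_diff F hUo.measurableSet
  have hEsub : F ∩ D ⊆ F \ U := by
    rintro p ⟨hpF, hpD⟩
    exact ⟨hpF, by simp only [hU, mem_setOf_eq]; simp only [hD, mem_setOf_eq] at hpD; linarith⟩
  have hfinal : ENNReal.ofReal (2 * a) + ENNReal.ofReal (2 * a) ≤ μH[1] F := by
    rw [← hsplit]
    exact add_le_add hUb (le_trans hDb (measure_mono hEsub))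
  refine lt_of_lt_of_le ?_ hfinal
  rw [← ENNReal.ofReal_add (by linarith) (by linarith)]
  have h4 : (4 : ℝ≥0∞) = ENNReal.ofReal 4 := by norm_num
  rw [h4, ENNReal.ofReal_lt_ofReal_iff (by linarith)]
  linarith
end

section
/- Let a ∈ ℝ, let ε₀ > 0, and let U ⊆ ℝ² be an open set containing the closed rectangle [-1-ε₀, 1+ε₀] × [-ε₀, ε₀]. Let h : ℝ² → ℝ be twice continuously differentiable and harmonic on U (i.e., ∂²h/∂x² + ∂²h/∂y² = 0 on U), and define u(x, y) = h(x, y) - (a/2)·|y|. For 0 < ε ≤ ε₀, define the outward flux of ∇u through the boundary of the rectangle V_ε = [-1-ε, 1+ε] × [-ε, ε] by Flux(ε) = ∫_{-1-ε}^{1+ε} (∂u/∂y(x, ε) - ∂u/∂y(x, -ε)) dx + ∫_{-ε}^{ε} (∂u/∂x(1+ε, y) - ∂u/∂x(-1-ε, y)) dy, where the y-derivatives of u at y = ±ε are ∂h/∂y(x, ±ε) ∓ a/2. Then Flux(ε) tends to -2a as ε → 0⁺. -/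
open Set Filter

/-- Let `h` be `C²` and harmonic on an open set `U ⊆ ℝ²` containing the closed rectangle
`[-1-ε₀, 1+ε₀] × [-ε₀, ε₀]`, and let `u(x,y) = h(x,y) - (a/2)|y|`. The outward flux of `∇u`
through the boundary of the rectangle `V_ε = [-1-ε, 1+ε] × [-ε, ε]` (where for `0 < ε` the
`y`-derivatives of `u` on the horizontal edges `y = ±ε` are `∂h/∂y(x, ±ε) ∓ a/2` and the
`x`-derivatives are those of `h`) tends to `-2a` as `ε → 0⁺`. -/
theorem stmt5 (a ε₀ : ℝ) (hε₀ : 0 < ε₀) (U : Set (ℝ × ℝ)) (hU : IsOpen U)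
    (hrect : (Icc (-1 - ε₀) (1 + ε₀) ×ˢ Icc (-ε₀) ε₀) ⊆ U)
    (h : ℝ × ℝ → ℝ) (hh : ContDiffOn ℝ 2 h U)
    (hharm : ∀ p ∈ U,
      deriv (fun s => deriv (fun r => h (r, p.2)) s) p.1 +
        deriv (fun s => deriv (fun r => h (p.1, r)) s) p.2 = 0)
    (Flux : ℝ → ℝ)
    (hFlux : ∀ ε ∈ Ioc (0 : ℝ) ε₀, Flux ε =
      (∫ x in (-1 - ε)..(1 + ε),
        ((deriv (fun r => h (x, r)) ε - a / 2) - (deriv (fun r => h (x, r)) (-ε) + a / 2))) +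
      ∫ y in (-ε)..ε,
        (deriv (fun r => h (r, y)) (1 + ε) - deriv (fun r => h (r, y)) (-1 - ε))) :
    Tendsto Flux (nhdsWithin 0 (Ioc (0 : ℝ) ε₀)) (nhds (-2 * a)) := by
  -- the compact rectangle
  set K : Set (ℝ × ℝ) := Icc (-1 - ε₀) (1 + ε₀) ×ˢ Icc (-ε₀) ε₀ with hKdef
  have hK : IsCompact K := isCompact_Icc.prod isCompact_Icc
  -- partial derivatives as continuous functions
  set g : ℝ × ℝ → ℝ := fun p => fderiv ℝ h p (0, 1) with hgdef
  set f : ℝ × ℝ → ℝ := fun p => fderiv ℝ h p (1, 0) with hfdef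
  have hder : ∀ p ∈ U, HasFDerivAt h (fderiv ℝ h p) p := by
    intro p hp
    exact ((hh.differentiableOn (by norm_num) p hp).differentiableAt
      (hU.mem_nhds hp)).hasFDerivAt
  have hgy : ∀ x y : ℝ, (x, y) ∈ U → deriv (fun r => h (x, r)) y = g (x, y) := by
    intro x y hp
    have h1 : HasDerivAt (fun r : ℝ => (x, r)) ((0 : ℝ), (1 : ℝ)) y :=
      HasDerivAt.prodMk (hasDerivAt_const y x) (hasDerivAt_id y)
    exact ((hder (x, y) hp).comp_hasDerivAt y h1).deriv
  have hfx : ∀ x y : ℝ, (x, y) ∈ U → deriv (fun r => h (r, y)) x = f (x, y) := by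
    intro x y hp
    have h1 : HasDerivAt (fun r : ℝ => (r, y)) ((1 : ℝ), (0 : ℝ)) x :=
      HasDerivAt.prodMk (hasDerivAt_id x) (hasDerivAt_const x y)
    exact ((hder (x, y) hp).comp_hasDerivAt x h1).deriv
  have hFcont : ContinuousOn (fderiv ℝ h) U :=
    hh.continuousOn_fderiv_of_isOpen hU (by norm_num)
  have hgcont : ContinuousOn g U := hFcont.clm_apply continuousOn_const
  have hfcont : ContinuousOn f U := hFcont.clm_apply continuousOn_const
  -- membership helpers
  have hmem1 : ∀ ε ∈ Ioc (0:ℝ) ε₀, ∀ x ∈ Icc (-1 - ε) (1 + ε), (x, ε) ∈ K := by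
    rintro ε ⟨hε1, hε2⟩ x hx
    simp only [hKdef, mem_prod, mem_Icc]
    exact ⟨⟨by linarith [hx.1], by linarith [hx.2]⟩, by linarith, hε2⟩
  have hmem2 : ∀ ε ∈ Ioc (0:ℝ) ε₀, ∀ x ∈ Icc (-1 - ε) (1 + ε), (x, -ε) ∈ K := by
    rintro ε ⟨hε1, hε2⟩ x hx
    simp only [hKdef, mem_prod, mem_Icc]
    exact ⟨⟨by linarith [hx.1], by linarith [hx.2]⟩, by linarith, by linarith⟩
  have hmem3 : ∀ ε ∈ Ioc (0:ℝ) ε₀, ∀ y ∈ Icc (-ε) ε, (1 + ε, y) ∈ K := by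
    rintro ε ⟨hε1, hε2⟩ y hy
    simp only [hKdef, mem_prod, mem_Icc]
    exact ⟨⟨by linarith, by linarith⟩, by linarith [hy.1], by linarith [hy.2]⟩
  have hmem4 : ∀ ε ∈ Ioc (0:ℝ) ε₀, ∀ y ∈ Icc (-ε) ε, (-1 - ε, y) ∈ K := by
    rintro ε ⟨hε1, hε2⟩ y hy
    simp only [hKdef, mem_prod, mem_Icc]
    exact ⟨⟨by linarith, by linarith⟩, by linarith [hy.1], by linarith [hy.2]⟩
  -- rewrite Flux
  have hFlux' : ∀ ε ∈ Ioc (0:ℝ) ε₀, Flux ε =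
      (∫ x in (-1 - ε)..(1 + ε), (g (x, ε) - g (x, -ε))) - a * (2 + 2 * ε) +
      ∫ y in (-ε)..ε, (f (1 + ε, y) - f (-1 - ε, y)) := by
    intro ε hε
    obtain ⟨hε1, hε2⟩ := hε
    have huIcc1 : uIcc (-1 - ε) (1 + ε) = Icc (-1 - ε) (1 + ε) := uIcc_of_le (by linarith)
    have huIcc2 : uIcc (-ε) ε = Icc (-ε) ε := uIcc_of_le (by linarith)
    rw [hFlux ε ⟨hε1, hε2⟩]
    have e1 : (∫ x in (-1 - ε)..(1 + ε),
        ((deriv (fun r => h (x, r)) ε - a / 2) - (deriv (fun r => h (x, r)) (-ε) + a / 2))) =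
        ∫ x in (-1 - ε)..(1 + ε), ((g (x, ε) - g (x, -ε)) - a) := by
      apply intervalIntegral.integral_congr
      intro x hx
      rw [huIcc1] at hx
      dsimp only
      rw [hgy x ε (hrect (hmem1 ε ⟨hε1, hε2⟩ x hx)),
        hgy x (-ε) (hrect (hmem2 ε ⟨hε1, hε2⟩ x hx))]
      ring
    have e2 : (∫ y in (-ε)..ε,
        (deriv (fun r => h (r, y)) (1 + ε) - deriv (fun r => h (r, y)) (-1 - ε))) =
        ∫ y in (-ε)..ε, (f (1 + ε, y) - f (-1 - ε, y)) := by
      apply intervalIntegral.integral_congr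
      intro y hy
      rw [huIcc2] at hy
      dsimp only
      rw [hfx (1 + ε) y (hrect (hmem3 ε ⟨hε1, hε2⟩ y hy)),
        hfx (-1 - ε) y (hrect (hmem4 ε ⟨hε1, hε2⟩ y hy))]
    rw [e1, e2]
    have hint : IntervalIntegrable (fun x => g (x, ε) - g (x, -ε)) MeasureTheory.volume
        (-1 - ε) (1 + ε) := by
      apply ContinuousOn.intervalIntegrable
      rw [huIcc1]
      apply ContinuousOn.sub
      · exact (hgcont.comp (continuous_id.prodMk continuous_const).continuousOn
          (fun x hx => hrect (hmem1 ε ⟨hε1, hε2⟩ x hx)))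
      · exact (hgcont.comp (continuous_id.prodMk continuous_const).continuousOn
          (fun x hx => hrect (hmem2 ε ⟨hε1, hε2⟩ x hx)))
    rw [intervalIntegral.integral_sub hint (intervalIntegrable_const)]
    rw [intervalIntegral.integral_const]
    have : (1 + ε - (-1 - ε)) = 2 + 2 * ε := by ring
    rw [this, smul_eq_mul]
    ring
  -- bounds
  obtain ⟨M, hM⟩ := hK.exists_bound_of_continuousOn (hfcont.mono hrect)
  have hM0 : 0 ≤ M := le_trans (norm_nonneg _) (hM (0, 0) (by
    simp only [hKdef, mem_prod, mem_Icc]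
    exact ⟨⟨by linarith, by linarith⟩, by linarith, by linarith⟩))
  have hUC : UniformContinuousOn g K :=
    hK.uniformContinuousOn_of_continuous (hgcont.mono hrect)
  rw [Metric.tendsto_nhdsWithin_nhds]
  intro η hη
  have hden : (0:ℝ) < 2 + 2 * ε₀ := by linarith
  set η₁ := η / 2 / (2 + 2 * ε₀) with hη₁def
  have hη₁ : 0 < η₁ := by positivity
  obtain ⟨δ₁, hδ₁, hUC'⟩ := (Metric.uniformContinuousOn_iff.1 hUC) η₁ hη₁
  set δ₂ := η / 2 / (4 * M + 2 * |a| + 1) with hδ₂def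
  have hc0 : (0:ℝ) < 4 * M + 2 * |a| + 1 := by positivity
  have hδ₂ : 0 < δ₂ := by positivity
  refine ⟨min (δ₁ / 2) δ₂, lt_min (by linarith) hδ₂, ?_⟩
  intro ε hε hdist
  obtain ⟨hε1, hε2⟩ := hε
  rw [Real.dist_eq, sub_zero, abs_of_pos hε1] at hdist
  have hεδ₁ : ε < δ₁ / 2 := lt_of_lt_of_le hdist (min_le_left _ _)
  have hεδ₂ : ε < δ₂ := lt_of_lt_of_le hdist (min_le_right _ _)
  rw [hFlux' ε ⟨hε1, hε2⟩]
  rw [Real.dist_eq]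
  -- bound on the first integral
  have hb1 : |∫ x in (-1 - ε)..(1 + ε), (g (x, ε) - g (x, -ε))| ≤ η₁ * (2 + 2 * ε) := by
    have := intervalIntegral.norm_integral_le_of_norm_le_const
      (a := -1 - ε) (b := 1 + ε) (C := η₁) (f := fun x => g (x, ε) - g (x, -ε)) ?_
    · rw [Real.norm_eq_abs] at this
      calc |∫ x in (-1 - ε)..(1 + ε), (g (x, ε) - g (x, -ε))| ≤ η₁ * |1 + ε - (-1 - ε)| := this
        _ = η₁ * (2 + 2 * ε) := by rw [abs_of_pos (by linarith)]; ring
    · intro x hx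
      rw [uIoc_of_le (by linarith : (-1 - ε) ≤ 1 + ε)] at hx
      have hx' : x ∈ Icc (-1 - ε) (1 + ε) := ⟨le_of_lt hx.1, hx.2⟩
      have hd : dist ((x, ε) : ℝ × ℝ) (x, -ε) < δ₁ := by
        rw [Prod.dist_eq]
        simp only [dist_self, Real.dist_eq]
        have h2ε : |ε - -ε| = 2 * ε := by rw [abs_of_pos (by linarith)]; ring
        rw [h2ε]
        exact max_lt hδ₁ (by linarith)
      have := hUC' (x, ε) (hmem1 ε ⟨hε1, hε2⟩ x hx') (x, -ε) (hmem2 ε ⟨hε1, hε2⟩ x hx') hd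
      rw [Real.dist_eq] at this
      exact le_of_lt this
  -- bound on the second integral
  have hb2 : |∫ y in (-ε)..ε, (f (1 + ε, y) - f (-1 - ε, y))| ≤ 2 * M * (2 * ε) := by
    have := intervalIntegral.norm_integral_le_of_norm_le_const
      (a := -ε) (b := ε) (C := 2 * M) (f := fun y => f (1 + ε, y) - f (-1 - ε, y)) ?_
    · rw [Real.norm_eq_abs] at this
      calc |∫ y in (-ε)..ε, (f (1 + ε, y) - f (-1 - ε, y))| ≤ 2 * M * |ε - -ε| := this
        _ = 2 * M * (2 * ε) := by rw [abs_of_pos (by linarith)]; ring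
    · intro y hy
      rw [uIoc_of_le (by linarith : (-ε) ≤ ε)] at hy
      have hy' : y ∈ Icc (-ε) ε := ⟨le_of_lt hy.1, hy.2⟩
      calc ‖f (1 + ε, y) - f (-1 - ε, y)‖ ≤ ‖f (1 + ε, y)‖ + ‖f (-1 - ε, y)‖ := norm_sub_le _ _
        _ ≤ M + M := add_le_add (hM _ (hmem3 ε ⟨hε1, hε2⟩ y hy'))
            (hM _ (hmem4 ε ⟨hε1, hε2⟩ y hy'))
        _ = 2 * M := by ring
  -- final estimate
  have key : η₁ * (2 + 2 * ε) ≤ η / 2 := by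
    rw [hη₁def]
    rw [div_mul_eq_mul_div, div_le_iff₀ hden] at *
    nlinarith [hη₁, hε2]
  have key2 : 2 * M * (2 * ε) + 2 * |a| * ε < η / 2 := by
    have h1 : (4 * M + 2 * |a|) * ε ≤ (4 * M + 2 * |a|) * δ₂ :=
      mul_le_mul_of_nonneg_left (le_of_lt hεδ₂) (by positivity)
    have h2 : (4 * M + 2 * |a|) * δ₂ < (4 * M + 2 * |a| + 1) * δ₂ := by nlinarith
    have h3 : (4 * M + 2 * |a| + 1) * δ₂ = η / 2 := by
      rw [hδ₂def]; field_simp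
    nlinarith
  calc |(∫ x in (-1 - ε)..(1 + ε), (g (x, ε) - g (x, -ε))) - a * (2 + 2 * ε) +
        (∫ y in (-ε)..ε, (f (1 + ε, y) - f (-1 - ε, y))) - -2 * a|
      = |(∫ x in (-1 - ε)..(1 + ε), (g (x, ε) - g (x, -ε))) +
        ((∫ y in (-ε)..ε, (f (1 + ε, y) - f (-1 - ε, y))) + (-(a * (2 * ε))))| := by ring_nf
    _ ≤ |∫ x in (-1 - ε)..(1 + ε), (g (x, ε) - g (x, -ε))| +
        (|∫ y in (-ε)..ε, (f (1 + ε, y) - f (-1 - ε, y))| + |a * (2 * ε)|) := by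
          exact le_trans (abs_add_le _ _) (by gcongr; exact (abs_add_le _ _).trans (le_of_eq (by rw [abs_neg])))
    _ ≤ η₁ * (2 + 2 * ε) + (2 * M * (2 * ε) + 2 * |a| * ε) := by
        have : |a * (2 * ε)| = 2 * |a| * ε := by
          rw [abs_mul, abs_of_pos (by linarith : (0:ℝ) < 2 * ε)]; ring
        rw [this]; gcongr
    _ < η / 2 + η / 2 := by
        apply add_lt_add_of_le_of_lt key key2
    _ = η := by ring
end
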